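/- Let F = {f₁,…,f_k} be an IFS of similarities on ℝ^d (no open set condition assumed) with factors c_i ∈ (0,1) and attractor K of positive diameter. Then dim_H(K) ≤ dim³(K) = s, where s is the unique solution of ∑_i c_i^s = 1 and dim³ is the fractal dimension III with respect to the natural fractal structure of K. -/

import Mathlib

open Metric Set Filter Topology MeasureTheory ENNReal NNReal

noncomputable section

/-- A map is a similarity with factor `c` if it scales all distances exactly by `c`. -/
def IsSimilarity {X : Type*} [MetricSpace X] (f : X → X) (c : ℝ) : Prop :=
  ∀ x y, dist (f x) (f y) = c * dist x y

/-- Composition `f_{ω₁} ∘ ⋯ ∘ f_{ω_n}` of the maps of an IFS along a word `ω`. -/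
def wordComp {X : Type*} {k : ℕ} (f : Fin k → X → X) {n : ℕ} (ω : Fin n → Fin k) : X → X :=
  (List.ofFn fun i => f (ω i)).foldr (· ∘ ·) id

/-- Number of elements of level `Γ_n` of the natural fractal structure (counted with
multiplicity over words) that meet `K`. -/
def levelCount {X : Type*} [MetricSpace X] {k : ℕ} (f : Fin k → X → X) (K : Set X)
    (n : ℕ) : ℕ :=
  Set.ncard {ω : Fin n → Fin k | ((wordComp f ω '' K) ∩ K).Nonempty}

/-- `δ(K, Γ_n)`: supremum of diameters of the elements of level `Γ_n` meeting `K`. -/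
def deltaLevel {X : Type*} [MetricSpace X] {k : ℕ} (f : Fin k → X → X) (K : Set X)
    (n : ℕ) : ℝ :=
  sSup {d : ℝ | ∃ ω : Fin n → Fin k, ((wordComp f ω '' K) ∩ K).Nonempty ∧
    d = Metric.diam (wordComp f ω '' K)}

/-- `N_δ(K)`: the largest number of disjoint closed balls of radius `δ` with centres in `K`. -/
def packingNum {X : Type*} [MetricSpace X] (K : Set X) (δ : ℝ) : ℕ :=
  sSup {m : ℕ | ∃ t : Finset X, t.card = m ∧ ↑t ⊆ K ∧
    (t : Set X).Pairwise fun x y => Disjoint (Metric.closedBall x δ) (Metric.closedBall y δ)}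

/-- The pre-measure `H^s_{n,3}(K)`: infimum over whole levels `m ≥ n` of the sum of the
`s`-th powers of the diameters of all elements of that level (with multiplicity). -/
def H3pre {X : Type*} [MetricSpace X] {k : ℕ} (f : Fin k → X → X) (K : Set X)
    (s : ℝ) (n : ℕ) : ℝ≥0∞ :=
  ⨅ m : {m : ℕ // n ≤ m}, ∑ ω : Fin m.1 → Fin k,
    ENNReal.ofReal (Metric.diam (wordComp f ω '' K)) ^ s

/-- `H^s_3(K)`: the (monotone) limit of `H^s_{n,3}(K)` as `n → ∞`. -/
def H3 {X : Type*} [MetricSpace X] {k : ℕ} (f : Fin k → X → X) (K : Set X) (s : ℝ) : ℝ≥0∞ :=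
  ⨆ n : ℕ, H3pre f K s n

/-- `H^s_4(K)`: limit over `n` of the infimum over finite covers of `K` by elements of
levels `≥ n` of the natural fractal structure. -/
def H4 {X : Type*} [MetricSpace X] {k : ℕ} (f : Fin k → X → X) (K : Set X) (s : ℝ) : ℝ≥0∞ :=
  ⨆ n : ℕ, ⨅ (𝒜 : Set (Set X)) (_ : 𝒜.Finite ∧
      (∀ A ∈ 𝒜, ∃ m, n ≤ m ∧ ∃ ω : Fin m → Fin k, A = wordComp f ω '' K) ∧ K ⊆ ⋃₀ 𝒜),
    ∑' A : 𝒜, ENNReal.ofReal (Metric.diam (A : Set X)) ^ s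

/-- `H^s_5(K)`: limit over `n` of the infimum over countable covers of `K` by elements of
levels `≥ n` of the natural fractal structure. -/
def H5 {X : Type*} [MetricSpace X] {k : ℕ} (f : Fin k → X → X) (K : Set X) (s : ℝ) : ℝ≥0∞ :=
  ⨆ n : ℕ, ⨅ (𝒜 : Set (Set X)) (_ : 𝒜.Countable ∧
      (∀ A ∈ 𝒜, ∃ m, n ≤ m ∧ ∃ ω : Fin m → Fin k, A = wordComp f ω '' K) ∧ K ⊆ ⋃₀ 𝒜),
    ∑' A : 𝒜, ENNReal.ofReal (Metric.diam (A : Set X)) ^ s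

/-- `H^s_6(K)`: limit as `δ → 0` of the infimum over countable covers of `K` by
fractal-structure elements of diameter at most `δ`. -/
def H6 {X : Type*} [MetricSpace X] {k : ℕ} (f : Fin k → X → X) (K : Set X) (s : ℝ) : ℝ≥0∞ :=
  ⨆ (δ : ℝ) (_ : 0 < δ), ⨅ (𝒜 : Set (Set X)) (_ : 𝒜.Countable ∧
      (∀ A ∈ 𝒜, (∃ m, ∃ ω : Fin m → Fin k, A = wordComp f ω '' K) ∧ Metric.diam A ≤ δ) ∧
      K ⊆ ⋃₀ 𝒜),
    ∑' A : 𝒜, ENNReal.ofReal (Metric.diam (A : Set X)) ^ s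

/-- The open set condition for a family of self-maps of `ℝ^d`. -/
def OSC {d k : ℕ} (f : Fin k → EuclideanSpace ℝ (Fin d) → EuclideanSpace ℝ (Fin d)) : Prop :=
  ∃ V : Set (EuclideanSpace ℝ (Fin d)), V.Nonempty ∧ IsOpen V ∧ Bornology.IsBounded V ∧
    (∀ i, f i '' V ⊆ V) ∧ Pairwise fun i j => Disjoint (f i '' V) (f j '' V)

section Aux

variable {X : Type*} [MetricSpace X] {k : ℕ}

lemma wordComp_zero' (f : Fin k → X → X) (ω : Fin 0 → Fin k) : wordComp f ω = id := rfl

lemma wordComp_succ' (f : Fin k → X → X) {n : ℕ} (ω : Fin (n + 1) → Fin k) :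
    wordComp f ω = f (ω 0) ∘ wordComp f (fun i => ω i.succ) := by
  simp [wordComp, List.ofFn_succ]

lemma wordComp_similarity (f : Fin k → X → X) (c : Fin k → ℝ)
    (hf : ∀ i, IsSimilarity (f i) (c i)) : ∀ {n : ℕ} (ω : Fin n → Fin k),
    IsSimilarity (wordComp f ω) (∏ i, c (ω i)) := by
  intro n
  induction n with
  | zero => intro ω x y; simp [wordComp_zero']
  | succ n ih =>
    intro ω x y
    rw [wordComp_succ', Fin.prod_univ_succ]
    simp only [Function.comp_apply]
    rw [hf (ω 0), ih (fun i => ω i.succ) x y, mul_assoc]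

lemma ediam_image_similarity {g : X → X} {r : ℝ} (hr : 0 < r) (hg : IsSimilarity g r)
    (A : Set X) : Metric.ediam (g '' A) = ENNReal.ofReal r * Metric.ediam A := by
  have hed : ∀ x y : X, edist (g x) (g y) = ENNReal.ofReal r * edist x y := by
    intro x y
    rw [edist_dist, edist_dist, hg, ENNReal.ofReal_mul hr.le]
  have h0 : ENNReal.ofReal r ≠ 0 := by simp [hr]
  apply le_antisymm
  · apply EMetric.diam_le
    rintro _ ⟨x, hx, rfl⟩ _ ⟨y, hy, rfl⟩
    rw [hed]
    exact mul_le_mul_right (EMetric.edist_le_diam_of_mem hx hy) _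
  · rw [mul_comm, ← ENNReal.le_div_iff_mul_le (Or.inl h0) (Or.inl ENNReal.ofReal_ne_top)]
    apply EMetric.diam_le
    intro x hx y hy
    rw [ENNReal.le_div_iff_mul_le (Or.inl h0) (Or.inl ENNReal.ofReal_ne_top), mul_comm, ← hed]
    exact EMetric.edist_le_diam_of_mem ⟨x, hx, rfl⟩ ⟨y, hy, rfl⟩

lemma diam_image_similarity {g : X → X} {r : ℝ} (hr : 0 < r) (hg : IsSimilarity g r)
    (A : Set X) : Metric.diam (g '' A) = r * Metric.diam A := by
  rw [Metric.diam, Metric.diam, ediam_image_similarity hr hg,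
    ENNReal.toReal_mul, ENNReal.toReal_ofReal hr.le]

lemma cover_level (f : Fin k → X → X) (K : Set X) (hK : K ⊆ ⋃ i, f i '' K) (m : ℕ) :
    K ⊆ ⋃ ω : Fin m → Fin k, wordComp f ω '' K := by
  induction m with
  | zero =>
    intro x hx
    exact mem_iUnion.2 ⟨fun i => i.elim0, ⟨x, hx, rfl⟩⟩
  | succ m ih =>
    intro x hx
    obtain ⟨i, y, hy, rfl⟩ : ∃ i y, y ∈ K ∧ f i y = x := by
      obtain ⟨i, y, hy, hyx⟩ := mem_iUnion.1 (hK hx)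
      exact ⟨i, y, hy, hyx⟩
    obtain ⟨ω, z, hz, rfl⟩ := mem_iUnion.1 (ih hy)
    refine mem_iUnion.2 ⟨Fin.cons i ω, ⟨z, hz, ?_⟩⟩
    rw [wordComp_succ']
    simp [Fin.cons_zero, Fin.cons_succ]

lemma level_sum' {d k : ℕ} {f : Fin k → EuclideanSpace ℝ (Fin d) → EuclideanSpace ℝ (Fin d)}
    {c : Fin k → ℝ} {K : Set (EuclideanSpace ℝ (Fin d))}
    (hc : ∀ i, c i ∈ Set.Ioo (0 : ℝ) 1) (hf : ∀ i, IsSimilarity (f i) (c i))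
    (hD : 0 < Metric.diam K) (t : ℝ) (m : ℕ) :
    ∑ ω : Fin m → Fin k, ENNReal.ofReal (Metric.diam (wordComp f ω '' K)) ^ t
      = ENNReal.ofReal ((∑ i, c i ^ t) ^ m * Metric.diam K ^ t) := by
  have key : ∀ ω : Fin m → Fin k,
      ENNReal.ofReal (Metric.diam (wordComp f ω '' K)) ^ t
        = ENNReal.ofReal ((∏ i, c (ω i) ^ t) * Metric.diam K ^ t) := by
    intro ω
    have hP : 0 < ∏ i, c (ω i) := Finset.prod_pos fun i _ => (hc (ω i)).1
    rw [diam_image_similarity hP (wordComp_similarity f c hf ω),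
      ENNReal.ofReal_rpow_of_pos (mul_pos hP hD),
      Real.mul_rpow hP.le hD.le,
      Real.finset_prod_rpow _ _ (fun i _ => (hc (ω i)).1.le)]
  rw [Finset.sum_congr rfl fun ω _ => key ω,
    ← ENNReal.ofReal_sum_of_nonneg (fun ω _ => mul_nonneg
      (Finset.prod_nonneg fun i _ => (Real.rpow_pos_of_pos (hc _).1 t).le)
      (Real.rpow_pos_of_pos hD t).le), ← Finset.sum_mul,
    ← Fintype.sum_pow (fun j : Fin k => c j ^ t) m]

end Aux

/-- without the OSC, the Hausdorff dimension of the attractor is bounded by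
the fractal dimension III, which equals the Moran root `s`. -/
theorem dimH_le_dim3_eq_moran_root {d k : ℕ}
    (f : Fin k → EuclideanSpace ℝ (Fin d) → EuclideanSpace ℝ (Fin d))
    (c : Fin k → ℝ) (hc : ∀ i, c i ∈ Set.Ioo (0 : ℝ) 1)
    (hf : ∀ i, IsSimilarity (f i) (c i))
    (K : Set (EuclideanSpace ℝ (Fin d))) (hne : K.Nonempty) (hcpt : IsCompact K)
    (hK : K = ⋃ i, f i '' K) (hdiam : 0 < Metric.diam K)
    (s : ℝ) (hs : 0 ≤ s) (hsum : ∑ i, c i ^ s = 1) :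
    dimH K ≤ ENNReal.ofReal s ∧ sInf {t : ℝ | 0 ≤ t ∧ H3 f K t = 0} = s := by
  have hKb : Bornology.IsBounded K := hcpt.isBounded
  haveI hKne : Nonempty (Fin k) := by
    rcases Nat.eq_zero_or_pos k with hk | hk
    · subst hk; norm_num at hsum
    · exact ⟨⟨0, hk⟩⟩
  have hcov : ∀ m, K ⊆ ⋃ ω : Fin m → Fin k, wordComp f ω '' K :=
    cover_level f K hK.le
  have ha_lt : ∀ t : ℝ, s < t → (∑ i, c i ^ t) < 1 := by
    intro t ht
    calc (∑ i, c i ^ t) < ∑ i, c i ^ s :=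
      Finset.sum_lt_sum_of_nonempty Finset.univ_nonempty fun i _ =>
        Real.rpow_lt_rpow_of_exponent_gt (hc i).1 (hc i).2 ht
    _ = 1 := hsum
  have ha_pos : ∀ t : ℝ, 0 ≤ (∑ i, c i ^ t) := fun t =>
    Finset.sum_nonneg fun i _ => (Real.rpow_pos_of_pos (hc i).1 t).le
  have ha_ge : ∀ t : ℝ, t ≤ s → 1 ≤ (∑ i, c i ^ t) := by
    intro t ht
    calc (1 : ℝ) = ∑ i, c i ^ s := hsum.symm
    _ ≤ ∑ i, c i ^ t := Finset.sum_le_sum fun i _ =>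
        Real.rpow_le_rpow_of_exponent_ge (hc i).1 (hc i).2.le ht
  have hH3zero : ∀ t : ℝ, s < t → H3 f K t = 0 := by
    intro t ht
    have hlt := ha_lt t ht
    have htend : Tendsto
        (fun m : ℕ => ENNReal.ofReal ((∑ i, c i ^ t) ^ m * Metric.diam K ^ t))
        atTop (𝓝 0) := by
      have h1 : Tendsto (fun m : ℕ => (∑ i, c i ^ t) ^ m * Metric.diam K ^ t)
          atTop (𝓝 0) := by
        simpa using
          (tendsto_pow_atTop_nhds_zero_of_lt_one (ha_pos t) hlt).mul_const (Metric.diam K ^ t)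
      simpa using ENNReal.tendsto_ofReal h1
    have hpre : ∀ n, H3pre f K t n = 0 := by
      intro n
      refine le_antisymm ?_ (zero_le)
      refine ge_of_tendsto htend ?_
      filter_upwards [eventually_ge_atTop n] with m hm
      exact le_trans (iInf_le _ ⟨m, hm⟩) (level_sum' hc hf hdiam t m).le
    simp [H3, hpre]
  have hH3pos : ∀ t : ℝ, t ≤ s → H3 f K t ≠ 0 := by
    intro t ht
    have hDt : (0 : ℝ) < Metric.diam K ^ t := Real.rpow_pos_of_pos hdiam t
    have hlow : ENNReal.ofReal (Metric.diam K ^ t) ≤ H3pre f K t 0 := by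
      refine le_iInf fun m => ?_
      rw [level_sum' hc hf hdiam t m.1]
      refine ENNReal.ofReal_le_ofReal ?_
      calc Metric.diam K ^ t = 1 * Metric.diam K ^ t := (one_mul _).symm
      _ ≤ (∑ i, c i ^ t) ^ m.1 * Metric.diam K ^ t :=
          mul_le_mul_of_nonneg_right (one_le_pow₀ (ha_ge t ht)) hDt.le
    have hle : ENNReal.ofReal (Metric.diam K ^ t) ≤ H3 f K t :=
      le_trans hlow (le_iSup _ 0)
    intro h0
    rw [h0, le_zero_iff, ENNReal.ofReal_eq_zero] at hle
    linarith
  constructor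
  · refine dimH_le fun t' ht' => ?_
    by_contra hlt
    push_neg at hlt
    have hst : s < (t' : ℝ) := by
      rw [← ENNReal.ofReal_coe_nnreal] at hlt
      exact (ENNReal.ofReal_lt_ofReal_iff_of_nonneg hs).1 hlt
    obtain ⟨i₀, -, hi₀⟩ := Finset.exists_max_image Finset.univ c Finset.univ_nonempty
    have hb0 : 0 < c i₀ := (hc i₀).1
    have hb1 : c i₀ < 1 := (hc i₀).2
    have himg : ∀ {m : ℕ} (ω : Fin m → Fin k),
        Metric.ediam (wordComp f ω '' K)
          = ENNReal.ofReal ((∏ i, c (ω i)) * Metric.diam K) := by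
      intro m ω
      have hP : 0 < ∏ i, c (ω i) := Finset.prod_pos fun i _ => (hc (ω i)).1
      rw [ediam_image_similarity hP (wordComp_similarity f c hf ω) K,
        ← ENNReal.ofReal_toReal hKb.ediam_ne_top, ← ENNReal.ofReal_mul hP.le]
      rfl
    have hmu : μH[(t' : ℝ)] K = 0 := by
      have hbound := MeasureTheory.Measure.hausdorffMeasure_le_liminf_sum (t' : ℝ) K
        (l := atTop) (ι := fun m : ℕ => Fin m → Fin k)
        (fun m => ENNReal.ofReal (c i₀ ^ m * Metric.diam K))
        (by
          have h1 : Tendsto (fun m : ℕ => c i₀ ^ m * Metric.diam K) atTop (𝓝 0) := by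
            simpa using
              (tendsto_pow_atTop_nhds_zero_of_lt_one hb0.le hb1).mul_const (Metric.diam K)
          simpa using ENNReal.tendsto_ofReal h1)
        (fun m ω => wordComp f ω '' K)
        (by
          filter_upwards with m ω
          rw [himg ω]
          refine ENNReal.ofReal_le_ofReal
            (mul_le_mul_of_nonneg_right ?_ Metric.diam_nonneg)
          have hpp : (∏ i, c (ω i)) ≤ ∏ _i : Fin m, c i₀ :=
            Finset.prod_le_prod (fun i _ => (hc (ω i)).1.le)
              (fun i _ => hi₀ (ω i) (Finset.mem_univ _))
          simpa using hpp)
        (by filter_upwards with m; exact hcov m)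
      have hsumeq : ∀ m : ℕ,
          (∑ ω : Fin m → Fin k, Metric.ediam (wordComp f ω '' K) ^ (t' : ℝ))
            = ENNReal.ofReal ((∑ i, c i ^ (t' : ℝ)) ^ m * Metric.diam K ^ (t' : ℝ)) := by
        intro m
        rw [← level_sum' hc hf hdiam (t' : ℝ) m]
        refine Finset.sum_congr rfl fun ω _ => ?_
        have hP : 0 < ∏ i, c (ω i) := Finset.prod_pos fun i _ => (hc (ω i)).1
        rw [himg ω, diam_image_similarity hP (wordComp_similarity f c hf ω) K]
      have htend0 : Tendsto
          (fun m : ℕ => ∑ ω : Fin m → Fin k, Metric.ediam (wordComp f ω '' K) ^ (t' : ℝ))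
          atTop (𝓝 0) := by
        simp only [hsumeq]
        have h1 : Tendsto
            (fun m : ℕ => (∑ i, c i ^ (t' : ℝ)) ^ m * Metric.diam K ^ (t' : ℝ))
            atTop (𝓝 0) := by
          simpa using (tendsto_pow_atTop_nhds_zero_of_lt_one (ha_pos _)
            (ha_lt _ hst)).mul_const (Metric.diam K ^ (t' : ℝ))
        simpa using ENNReal.tendsto_ofReal h1
      exact le_antisymm (hbound.trans_eq htend0.liminf_eq) (zero_le)
    rw [hmu] at ht'
    exact ENNReal.zero_ne_top ht'
  · have hset : {t : ℝ | 0 ≤ t ∧ H3 f K t = 0} = Set.Ioi s := by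
      ext t
      constructor
      · rintro ⟨ht0, htz⟩
        by_contra h
        exact hH3pos t (not_lt.1 h) htz
      · intro ht
        exact ⟨hs.trans ht.le, hH3zero t ht⟩
    rw [hset, csInf_Ioi]
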